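/- Let λ ≠ 0 be a real number and let u, v : ℝ × ℝ → ℝ be three times continuously differentiable functions such that u solves the Chaffee–Infante equation u_t - u_xx + λ(u³ - u) = 0 and v solves its adjoint equation λ(3u²v - v) - v_t - v_xx = 0, at every point of ℝ². Then the pair of conserved vectors associated with the time-translation symmetry G₁ = ∂/∂t, namely T^t = v·(-u_xx + λu³ - λu) and T^x = -u_t·v_x + u_tx·v, satisfies the conservation law ∂T^t/∂t + ∂T^x/∂x = 0 at every point of ℝ². -/

import Mathlib

open ContinuousLinearMap

section Helpers

variable {F : Type*} [NormedAddCommGroup F] [NormedSpace ℝ F]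

/-- Partial derivative in the second coordinate as a directional fderiv. -/
lemma hasDerivAt_snd' (f : ℝ × ℝ → F) (hf : Differentiable ℝ f) (x t : ℝ) :
    HasDerivAt (fun s => f (x, s)) (fderiv ℝ f (x, t) (0, 1)) t := by
  have h1 : HasDerivAt (fun s : ℝ => ((x, s) : ℝ × ℝ)) ((0 : ℝ), (1 : ℝ)) t :=
    (hasDerivAt_const t x).prodMk (hasDerivAt_id t)
  exact (hf (x, t)).hasFDerivAt.comp_hasDerivAt t h1

/-- Partial derivative in the first coordinate as a directional fderiv. -/
lemma hasDerivAt_fst' (f : ℝ × ℝ → F) (hf : Differentiable ℝ f) (x t : ℝ) :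
    HasDerivAt (fun y => f (y, t)) (fderiv ℝ f (x, t) (1, 0)) x := by
  have h1 : HasDerivAt (fun y : ℝ => ((y, t) : ℝ × ℝ)) ((1 : ℝ), (0 : ℝ)) x :=
    (hasDerivAt_id x).prodMk (hasDerivAt_const x t)
  exact (hf (x, t)).hasFDerivAt.comp_hasDerivAt x h1

lemma hasDerivAt_snd_apply (f : ℝ × ℝ → ((ℝ × ℝ) →L[ℝ] F)) (hf : Differentiable ℝ f)
    (w : ℝ × ℝ) (x t : ℝ) :
    HasDerivAt (fun s => f (x, s) w) (fderiv ℝ f (x, t) (0, 1) w) t := by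
  simpa using (hasDerivAt_snd' f hf x t).clm_apply (hasDerivAt_const t w)

lemma hasDerivAt_fst_apply (f : ℝ × ℝ → ((ℝ × ℝ) →L[ℝ] F)) (hf : Differentiable ℝ f)
    (w : ℝ × ℝ) (x t : ℝ) :
    HasDerivAt (fun y => f (y, t) w) (fderiv ℝ f (x, t) (1, 0) w) x := by
  simpa using (hasDerivAt_fst' f hf x t).clm_apply (hasDerivAt_const x w)

lemma hasDerivAt_snd_apply2 (f : ℝ × ℝ → ((ℝ × ℝ) →L[ℝ] (ℝ × ℝ) →L[ℝ] ℝ))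
    (hf : Differentiable ℝ f) (w₁ w₂ : ℝ × ℝ) (x t : ℝ) :
    HasDerivAt (fun s => f (x, s) w₁ w₂) (fderiv ℝ f (x, t) (0, 1) w₁ w₂) t := by
  simpa using (hasDerivAt_snd_apply f hf w₁ x t).clm_apply (hasDerivAt_const t w₂)

lemma hasDerivAt_fst_apply2 (f : ℝ × ℝ → ((ℝ × ℝ) →L[ℝ] (ℝ × ℝ) →L[ℝ] ℝ))
    (hf : Differentiable ℝ f) (w₁ w₂ : ℝ × ℝ) (x t : ℝ) :
    HasDerivAt (fun y => f (y, t) w₁ w₂) (fderiv ℝ f (x, t) (1, 0) w₁ w₂) x := by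
  simpa using (hasDerivAt_fst_apply f hf w₁ x t).clm_apply (hasDerivAt_const x w₂)

/-- Evaluation commutes with fderiv for CLM-valued maps. -/
lemma fderiv_clm_eval (f : ℝ × ℝ → ((ℝ × ℝ) →L[ℝ] F)) (hf : Differentiable ℝ f)
    (p a w : ℝ × ℝ) :
    fderiv ℝ (fun q => f q w) p a = fderiv ℝ f p a w := by
  rw [fderiv_clm_apply (hf p) (differentiableAt_const w)]
  simp

lemma fderiv_clm_eval2 (f : ℝ × ℝ → ((ℝ × ℝ) →L[ℝ] (ℝ × ℝ) →L[ℝ] ℝ))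
    (hf : Differentiable ℝ f) (p a b c : ℝ × ℝ) :
    fderiv ℝ (fun q => f q b c) p a = fderiv ℝ f p a b c := by
  have h1 : Differentiable ℝ (fun q => f q b) :=
    fun q => (hf q).clm_apply (differentiableAt_const b)
  have e1 : fderiv ℝ (fun q => f q b c) p a = fderiv ℝ (fun q => f q b) p a c :=
    fderiv_clm_eval (fun q => f q b) h1 p a c
  rw [e1, fderiv_clm_eval f hf p a b]

/-- Symmetry of the third derivative in the last two slots. -/
lemma third_symm_last (U : ℝ × ℝ → ℝ) (hU : ContDiff ℝ 3 U) (p a b c : ℝ × ℝ) :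
    fderiv ℝ (fderiv ℝ (fderiv ℝ U)) p a b c
      = fderiv ℝ (fderiv ℝ (fderiv ℝ U)) p a c b := by
  have hW : ContDiff ℝ 2 (fderiv ℝ U) := hU.fderiv_right (by norm_num)
  have hW2 : ContDiff ℝ 1 (fderiv ℝ (fderiv ℝ U)) := hW.fderiv_right (by norm_num)
  have hW2d : Differentiable ℝ (fderiv ℝ (fderiv ℝ U)) := hW2.differentiable one_ne_zero
  have hsym : ∀ q : ℝ × ℝ, (fun q => fderiv ℝ (fderiv ℝ U) q b c)
      = (fun q => fderiv ℝ (fderiv ℝ U) q c b) := by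
    intro _
    funext q
    exact (hU.contDiffAt.isSymmSndFDerivAt (by norm_num)) b c
  calc fderiv ℝ (fderiv ℝ (fderiv ℝ U)) p a b c
      = fderiv ℝ (fun q => fderiv ℝ (fderiv ℝ U) q b c) p a :=
        (fderiv_clm_eval2 _ hW2d p a b c).symm
    _ = fderiv ℝ (fun q => fderiv ℝ (fderiv ℝ U) q c b) p a := by rw [hsym p]
    _ = fderiv ℝ (fderiv ℝ (fderiv ℝ U)) p a c b := fderiv_clm_eval2 _ hW2d p a c b

/-- Symmetry of the third derivative in the first two slots. -/
lemma third_symm_first (U : ℝ × ℝ → ℝ) (hU : ContDiff ℝ 3 U) (p a b c : ℝ × ℝ) :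
    fderiv ℝ (fderiv ℝ (fderiv ℝ U)) p a b c
      = fderiv ℝ (fderiv ℝ (fderiv ℝ U)) p b a c := by
  have hW : ContDiff ℝ 2 (fderiv ℝ U) := hU.fderiv_right (by norm_num)
  have hWd : Differentiable ℝ (fderiv ℝ U) := hW.differentiable (by norm_num)
  have hW2 : ContDiff ℝ 1 (fderiv ℝ (fderiv ℝ U)) := hW.fderiv_right (by norm_num)
  have hW2d : Differentiable ℝ (fderiv ℝ (fderiv ℝ U)) := hW2.differentiable one_ne_zero
  have hg : ContDiff ℝ 2 (fun q => fderiv ℝ U q c) := hW.clm_apply contDiff_const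
  have hg1 : ContDiff ℝ 1 (fderiv ℝ (fun q => fderiv ℝ U q c)) :=
    hg.fderiv_right (by norm_num)
  have hgd : Differentiable ℝ (fderiv ℝ (fun q => fderiv ℝ U q c)) :=
    hg1.differentiable one_ne_zero
  have e2 : ∀ (b' : ℝ × ℝ), (fun q => fderiv ℝ (fun q' => fderiv ℝ U q' c) q b')
      = (fun q => fderiv ℝ (fderiv ℝ U) q b' c) := by
    intro b'
    funext q
    exact fderiv_clm_eval (fderiv ℝ U) hWd q b' c
  have hgsym : fderiv ℝ (fderiv ℝ (fun q => fderiv ℝ U q c)) p a b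
      = fderiv ℝ (fderiv ℝ (fun q => fderiv ℝ U q c)) p b a :=
    (hg.contDiffAt.isSymmSndFDerivAt (by norm_num)) a b
  calc fderiv ℝ (fderiv ℝ (fderiv ℝ U)) p a b c
      = fderiv ℝ (fun q => fderiv ℝ (fderiv ℝ U) q b c) p a :=
        (fderiv_clm_eval2 _ hW2d p a b c).symm
    _ = fderiv ℝ (fun q => fderiv ℝ (fun q' => fderiv ℝ U q' c) q b) p a := by rw [e2 b]
    _ = fderiv ℝ (fderiv ℝ (fun q => fderiv ℝ U q c)) p a b :=
        fderiv_clm_eval _ hgd p a b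
    _ = fderiv ℝ (fderiv ℝ (fun q => fderiv ℝ U q c)) p b a := hgsym
    _ = fderiv ℝ (fun q => fderiv ℝ (fun q' => fderiv ℝ U q' c) q a) p b :=
        (fderiv_clm_eval _ hgd p b a).symm
    _ = fderiv ℝ (fun q => fderiv ℝ (fderiv ℝ U) q a c) p b := by rw [e2 a]
    _ = fderiv ℝ (fderiv ℝ (fderiv ℝ U)) p b a c := fderiv_clm_eval2 _ hW2d p b a c

end Helpers

/-- Conservation law from the time-translation symmetry `G₁ = ∂/∂t`: if `u`
solves the Chaffee–Infante equation and `v` solves its adjoint equation (both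
C³, `λ ≠ 0`), then `T^t = v·(-u_xx + λu³ - λu)` and `T^x = -u_t·v_x + u_tx·v`
satisfy `∂T^t/∂t + ∂T^x/∂x = 0` everywhere. -/
theorem conservation_law_time_translation (lam : ℝ) (hlam : lam ≠ 0)
    (u v : ℝ → ℝ → ℝ)
    (hu : ContDiff ℝ 3 (fun p : ℝ × ℝ => u p.1 p.2))
    (hv : ContDiff ℝ 3 (fun p : ℝ × ℝ => v p.1 p.2))
    (hsol : ∀ x t : ℝ,
      deriv (fun s => u x s) t - iteratedDeriv 2 (fun y => u y t) x
        + lam * ((u x t)^3 - u x t) = 0)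
    (hadj : ∀ x t : ℝ,
      lam * (3 * (u x t)^2 * v x t - v x t)
        - deriv (fun s => v x s) t - iteratedDeriv 2 (fun y => v y t) x = 0)
    (Tt Tx : ℝ → ℝ → ℝ)
    (hTt : ∀ x t : ℝ, Tt x t
      = v x t * (-(iteratedDeriv 2 (fun y => u y t) x)
          + lam * (u x t)^3 - lam * u x t))
    (hTx : ∀ x t : ℝ, Tx x t
      = -(deriv (fun s => u x s) t) * deriv (fun y => v y t) x
        + deriv (fun y => deriv (fun s => u y s) t) x * v x t) :
    ∀ x t : ℝ,
      deriv (fun s => Tt x s) t + deriv (fun y => Tx y t) x = 0 := by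
  intro x t
  -- regularity
  have hUd : Differentiable ℝ (fun p : ℝ × ℝ => u p.1 p.2) := hu.differentiable (by norm_num)
  have hVd : Differentiable ℝ (fun p : ℝ × ℝ => v p.1 p.2) := hv.differentiable (by norm_num)
  have hUW : ContDiff ℝ 2 (fderiv ℝ (fun p : ℝ × ℝ => u p.1 p.2)) :=
    hu.fderiv_right (by norm_num)
  have hUWd : Differentiable ℝ (fderiv ℝ (fun p : ℝ × ℝ => u p.1 p.2)) :=
    hUW.differentiable (by norm_num)
  have hUW2 : ContDiff ℝ 1 (fderiv ℝ (fderiv ℝ (fun p : ℝ × ℝ => u p.1 p.2))) :=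
    hUW.fderiv_right (by norm_num)
  have hUW2d : Differentiable ℝ (fderiv ℝ (fderiv ℝ (fun p : ℝ × ℝ => u p.1 p.2))) :=
    hUW2.differentiable one_ne_zero
  have hVW : ContDiff ℝ 2 (fderiv ℝ (fun p : ℝ × ℝ => v p.1 p.2)) :=
    hv.fderiv_right (by norm_num)
  have hVWd : Differentiable ℝ (fderiv ℝ (fun p : ℝ × ℝ => v p.1 p.2)) :=
    hVW.differentiable (by norm_num)
  -- partial derivatives rewritten as fderivs
  have hut : ∀ x' t' : ℝ, deriv (fun s => u x' s) t'
      = fderiv ℝ (fun p : ℝ × ℝ => u p.1 p.2) (x', t') (0, 1) := fun x' t' =>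
    (hasDerivAt_snd' _ hUd x' t').deriv
  have hvt : ∀ x' t' : ℝ, deriv (fun s => v x' s) t'
      = fderiv ℝ (fun p : ℝ × ℝ => v p.1 p.2) (x', t') (0, 1) := fun x' t' =>
    (hasDerivAt_snd' _ hVd x' t').deriv
  have hvx : ∀ x' t' : ℝ, deriv (fun y => v y t') x'
      = fderiv ℝ (fun p : ℝ × ℝ => v p.1 p.2) (x', t') (1, 0) := fun x' t' =>
    (hasDerivAt_fst' _ hVd x' t').deriv
  have huxx : ∀ x' t' : ℝ, iteratedDeriv 2 (fun y => u y t') x'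
      = fderiv ℝ (fderiv ℝ (fun p : ℝ × ℝ => u p.1 p.2)) (x', t') (1, 0) (1, 0) := by
    intro x' t'
    rw [iteratedDeriv_succ, iteratedDeriv_one]
    have e : deriv (fun y => u y t')
        = fun y => fderiv ℝ (fun p : ℝ × ℝ => u p.1 p.2) (y, t') (1, 0) :=
      funext fun y => (hasDerivAt_fst' _ hUd y t').deriv
    rw [e]
    exact (hasDerivAt_fst_apply _ hUWd (1, 0) x' t').deriv
  have hvxx : ∀ x' t' : ℝ, iteratedDeriv 2 (fun y => v y t') x'
      = fderiv ℝ (fderiv ℝ (fun p : ℝ × ℝ => v p.1 p.2)) (x', t') (1, 0) (1, 0) := by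
    intro x' t'
    rw [iteratedDeriv_succ, iteratedDeriv_one]
    have e : deriv (fun y => v y t')
        = fun y => fderiv ℝ (fun p : ℝ × ℝ => v p.1 p.2) (y, t') (1, 0) :=
      funext fun y => (hasDerivAt_fst' _ hVd y t').deriv
    rw [e]
    exact (hasDerivAt_fst_apply _ hVWd (1, 0) x' t').deriv
  -- the PDE in fderiv form
  have hpde : ∀ x' t' : ℝ,
      fderiv ℝ (fun p : ℝ × ℝ => u p.1 p.2) (x', t') (0, 1)
        - fderiv ℝ (fderiv ℝ (fun p : ℝ × ℝ => u p.1 p.2)) (x', t') (1, 0) (1, 0)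
        + lam * ((u x' t')^3 - u x' t') = 0 := by
    intro x' t'
    have h := hsol x' t'
    rw [hut x' t', huxx x' t'] at h
    exact h
  -- T^t is -v * u_t
  have hTtfun : (fun s => Tt x s)
      = (fun s => -(v x s * fderiv ℝ (fun p : ℝ × ℝ => u p.1 p.2) (x, s) (0, 1))) := by
    funext s
    rw [hTt x s]
    have h := hsol x s
    rw [hut x s] at h
    linear_combination (v x s) * h
  -- T^x rewritten in fderiv form
  have hTxfun : (fun y => Tx y t)
      = (fun y => -(fderiv ℝ (fun p : ℝ × ℝ => u p.1 p.2) (y, t) (0, 1))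
            * fderiv ℝ (fun p : ℝ × ℝ => v p.1 p.2) (y, t) (1, 0)
          + fderiv ℝ (fderiv ℝ (fun p : ℝ × ℝ => u p.1 p.2)) (y, t) (1, 0) (0, 1)
            * v y t) := by
    funext y
    rw [hTx y t, hut y t, hvx y t]
    have e : (fun y' => deriv (fun s => u y' s) t)
        = fun y' => fderiv ℝ (fun p : ℝ × ℝ => u p.1 p.2) (y', t) (0, 1) :=
      funext fun y' => hut y' t
    rw [e, (hasDerivAt_fst_apply _ hUWd (0, 1) y t).deriv]
  -- derivative of T^t in time
  have hdTt : deriv (fun s => Tt x s) t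
      = -(fderiv ℝ (fun p : ℝ × ℝ => v p.1 p.2) (x, t) (0, 1)
            * fderiv ℝ (fun p : ℝ × ℝ => u p.1 p.2) (x, t) (0, 1)
          + v x t * fderiv ℝ (fderiv ℝ (fun p : ℝ × ℝ => u p.1 p.2)) (x, t) (0, 1) (0, 1)) := by
    rw [hTtfun]
    have h1 : HasDerivAt (fun s => v x s)
        (fderiv ℝ (fun p : ℝ × ℝ => v p.1 p.2) (x, t) (0, 1)) t :=
      hasDerivAt_snd' _ hVd x t
    have h2 : HasDerivAt (fun s => fderiv ℝ (fun p : ℝ × ℝ => u p.1 p.2) (x, s) (0, 1))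
        (fderiv ℝ (fderiv ℝ (fun p : ℝ × ℝ => u p.1 p.2)) (x, t) (0, 1) (0, 1)) t :=
      hasDerivAt_snd_apply _ hUWd (0, 1) x t
    exact ((h1.mul h2).neg).deriv
  -- derivative of T^x in space
  have hdTx : deriv (fun y => Tx y t) x
      = (-(fderiv ℝ (fderiv ℝ (fun p : ℝ × ℝ => u p.1 p.2)) (x, t) (1, 0) (0, 1))
            * fderiv ℝ (fun p : ℝ × ℝ => v p.1 p.2) (x, t) (1, 0)
          + -(fderiv ℝ (fun p : ℝ × ℝ => u p.1 p.2) (x, t) (0, 1))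
            * fderiv ℝ (fderiv ℝ (fun p : ℝ × ℝ => v p.1 p.2)) (x, t) (1, 0) (1, 0))
        + (fderiv ℝ (fderiv ℝ (fderiv ℝ (fun p : ℝ × ℝ => u p.1 p.2))) (x, t) (1, 0) (1, 0) (0, 1)
            * v x t
          + fderiv ℝ (fderiv ℝ (fun p : ℝ × ℝ => u p.1 p.2)) (x, t) (1, 0) (0, 1)
            * fderiv ℝ (fun p : ℝ × ℝ => v p.1 p.2) (x, t) (1, 0)) := by
    rw [hTxfun]
    have h1 : HasDerivAt (fun y => fderiv ℝ (fun p : ℝ × ℝ => u p.1 p.2) (y, t) (0, 1))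
        (fderiv ℝ (fderiv ℝ (fun p : ℝ × ℝ => u p.1 p.2)) (x, t) (1, 0) (0, 1)) x :=
      hasDerivAt_fst_apply _ hUWd (0, 1) x t
    have h2 : HasDerivAt (fun y => fderiv ℝ (fun p : ℝ × ℝ => v p.1 p.2) (y, t) (1, 0))
        (fderiv ℝ (fderiv ℝ (fun p : ℝ × ℝ => v p.1 p.2)) (x, t) (1, 0) (1, 0)) x :=
      hasDerivAt_fst_apply _ hVWd (1, 0) x t
    have h3 : HasDerivAt
        (fun y => fderiv ℝ (fderiv ℝ (fun p : ℝ × ℝ => u p.1 p.2)) (y, t) (1, 0) (0, 1))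
        (fderiv ℝ (fderiv ℝ (fderiv ℝ (fun p : ℝ × ℝ => u p.1 p.2))) (x, t) (1, 0) (1, 0) (0, 1))
        x := hasDerivAt_fst_apply2 _ hUW2d (1, 0) (0, 1) x t
    have h4 : HasDerivAt (fun y => v y t)
        (fderiv ℝ (fun p : ℝ × ℝ => v p.1 p.2) (x, t) (1, 0)) x :=
      hasDerivAt_fst' _ hVd x t
    exact ((h1.neg.mul h2).add (h3.mul h4)).deriv
  -- differentiate the PDE in time
  have hdiff : fderiv ℝ (fderiv ℝ (fun p : ℝ × ℝ => u p.1 p.2)) (x, t) (0, 1) (0, 1)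
      - fderiv ℝ (fderiv ℝ (fderiv ℝ (fun p : ℝ × ℝ => u p.1 p.2))) (x, t) (0, 1) (1, 0) (1, 0)
      + lam * ((3 : ℕ) * (u x t)^2 * fderiv ℝ (fun p : ℝ × ℝ => u p.1 p.2) (x, t) (0, 1)
          - fderiv ℝ (fun p : ℝ × ℝ => u p.1 p.2) (x, t) (0, 1)) = 0 := by
    have hA : HasDerivAt (fun s => fderiv ℝ (fun p : ℝ × ℝ => u p.1 p.2) (x, s) (0, 1))
        (fderiv ℝ (fderiv ℝ (fun p : ℝ × ℝ => u p.1 p.2)) (x, t) (0, 1) (0, 1)) t :=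
      hasDerivAt_snd_apply _ hUWd (0, 1) x t
    have hB : HasDerivAt
        (fun s => fderiv ℝ (fderiv ℝ (fun p : ℝ × ℝ => u p.1 p.2)) (x, s) (1, 0) (1, 0))
        (fderiv ℝ (fderiv ℝ (fderiv ℝ (fun p : ℝ × ℝ => u p.1 p.2))) (x, t) (0, 1) (1, 0) (1, 0))
        t := hasDerivAt_snd_apply2 _ hUW2d (1, 0) (1, 0) x t
    have hC : HasDerivAt (fun s => u x s)
        (fderiv ℝ (fun p : ℝ × ℝ => u p.1 p.2) (x, t) (0, 1)) t :=
      hasDerivAt_snd' _ hUd x t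
    have hC3 : HasDerivAt (fun s => (u x s)^3 - u x s)
        ((3 : ℕ) * (u x t)^2 * fderiv ℝ (fun p : ℝ × ℝ => u p.1 p.2) (x, t) (0, 1)
          - fderiv ℝ (fun p : ℝ × ℝ => u p.1 p.2) (x, t) (0, 1)) t := by
      simpa using (hC.fun_pow 3).fun_sub hC
    have hF : HasDerivAt
        (fun s => fderiv ℝ (fun p : ℝ × ℝ => u p.1 p.2) (x, s) (0, 1)
          - fderiv ℝ (fderiv ℝ (fun p : ℝ × ℝ => u p.1 p.2)) (x, s) (1, 0) (1, 0)
          + lam * ((u x s)^3 - u x s))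
        (fderiv ℝ (fderiv ℝ (fun p : ℝ × ℝ => u p.1 p.2)) (x, t) (0, 1) (0, 1)
          - fderiv ℝ (fderiv ℝ (fderiv ℝ (fun p : ℝ × ℝ => u p.1 p.2))) (x, t) (0, 1) (1, 0) (1, 0)
          + lam * ((3 : ℕ) * (u x t)^2 * fderiv ℝ (fun p : ℝ × ℝ => u p.1 p.2) (x, t) (0, 1)
              - fderiv ℝ (fun p : ℝ × ℝ => u p.1 p.2) (x, t) (0, 1))) t :=
      (hA.sub hB).add (hC3.const_mul lam)
    have heq : (fun s => fderiv ℝ (fun p : ℝ × ℝ => u p.1 p.2) (x, s) (0, 1)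
          - fderiv ℝ (fderiv ℝ (fun p : ℝ × ℝ => u p.1 p.2)) (x, s) (1, 0) (1, 0)
          + lam * ((u x s)^3 - u x s)) = fun _ => (0 : ℝ) :=
      funext fun s => hpde x s
    rw [heq] at hF
    exact hF.unique (hasDerivAt_const t 0)
  -- adjoint equation in fderiv form
  have hadj' : lam * (3 * (u x t)^2 * v x t - v x t)
      - fderiv ℝ (fun p : ℝ × ℝ => v p.1 p.2) (x, t) (0, 1)
      - fderiv ℝ (fderiv ℝ (fun p : ℝ × ℝ => v p.1 p.2)) (x, t) (1, 0) (1, 0) = 0 := by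
    have h := hadj x t
    rw [hvt x t, hvxx x t] at h
    exact h
  -- symmetry of mixed third partials
  have hsym : fderiv ℝ (fderiv ℝ (fderiv ℝ (fun p : ℝ × ℝ => u p.1 p.2))) (x, t) (1, 0) (1, 0) (0, 1)
      = fderiv ℝ (fderiv ℝ (fderiv ℝ (fun p : ℝ × ℝ => u p.1 p.2))) (x, t) (0, 1) (1, 0) (1, 0) := by
    rw [third_symm_last _ hu (x, t) (1, 0) (1, 0) (0, 1),
      third_symm_first _ hu (x, t) (1, 0) (0, 1) (1, 0)]
  rw [hdTt, hdTx, hsym]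
  push_cast at hdiff
  linear_combination
    (fderiv ℝ (fun p : ℝ × ℝ => u p.1 p.2) (x, t) (0, 1)) * hadj' - (v x t) * hdiff
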